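/- In a finite 2-dimensional weighted directed graph, there exists a reachable cycle C with w₁(C) ≥ 0 and w₂(C) > 0 if and only if either (1) there exists a reachable simple cycle with this property, or (2) there exist two simple cycles C, C' lying in the same strongly connected component reachable from the start vertex such that w(C) = (-x, y) and w(C') = (x', -y') with x, x', y positive integers and y' ∈ ℕ, and x'·y - x·y' > 0. -/

import Mathlib

section GoodCycleAux

variable {V : Type*} (E : V → V → Prop)

/-- concatenation of two indexed walks -/
def gcConcat (n : ℕ) (c d : ℕ → V) : ℕ → V := fun i => if i < n then c i else d (i - n)

lemma gcConcat_lt {n : ℕ} {c d : ℕ → V} {i : ℕ} (h : i < n) : gcConcat n c d i = c i :=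
  if_pos h

lemma gcConcat_ge {n : ℕ} {c d : ℕ → V} {i : ℕ} (h : n ≤ i) : gcConcat n c d i = d (i - n) :=
  if_neg (by omega)

lemma gcConcat_edges {n m : ℕ} {c d : ℕ → V} (hc : ∀ i < n, E (c i) (c (i+1)))
    (hd : ∀ i < m, E (d i) (d (i+1))) (hjoin : d 0 = c n) :
    ∀ i < n + m, E (gcConcat n c d i) (gcConcat n c d (i+1)) := by
  intro i hi
  by_cases h : i < n
  · rw [gcConcat_lt h]
    by_cases h2 : i + 1 < n
    · rw [gcConcat_lt h2]; exact hc i h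
    · have h3 : i + 1 = n := by omega
      rw [gcConcat_ge (by omega)]
      have h4 : i + 1 - n = 0 := by omega
      rw [h4, hjoin, ← h3]
      exact hc i h
  · rw [gcConcat_ge (by omega), gcConcat_ge (by omega)]
    have h3 : i + 1 - n = (i - n) + 1 := by omega
    rw [h3]
    exact hd (i - n) (by omega)

lemma gcConcat_sum (w : V → V → ℤ) {n m : ℕ} {c d : ℕ → V} (hjoin : d 0 = c n) :
    ∑ i ∈ Finset.range (n + m), w (gcConcat n c d i) (gcConcat n c d (i+1))
      = (∑ i ∈ Finset.range n, w (c i) (c (i+1))) + ∑ i ∈ Finset.range m, w (d i) (d (i+1)) := by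
  rw [Finset.sum_range_add]
  congr 1
  · apply Finset.sum_congr rfl
    intro i hi
    simp only [Finset.mem_range] at hi
    rw [gcConcat_lt hi]
    by_cases h2 : i + 1 < n
    · rw [gcConcat_lt h2]
    · have h3 : i + 1 = n := by omega
      rw [gcConcat_ge (by omega)]
      have h4 : i + 1 - n = 0 := by omega
      rw [h4, hjoin, ← h3]
  · apply Finset.sum_congr rfl
    intro i hi
    simp only [Finset.mem_range] at hi
    rw [gcConcat_ge (by omega), gcConcat_ge (by omega)]
    congr 2 <;> omega

lemma gcConcat_zero {n : ℕ} {c d : ℕ → V} (hjoin : d 0 = c n) (h0 : c n = c 0) :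
    gcConcat n c d 0 = c 0 := by
  by_cases h : 0 < n
  · exact gcConcat_lt h
  · rw [gcConcat_ge (by omega)]
    simpa [Nat.sub_zero] using hjoin.trans h0

lemma gcConcat_last {n m : ℕ} {c d : ℕ → V} :
    gcConcat n c d (n + m) = d m := by
  rw [gcConcat_ge (by omega)]
  congr 1; omega

/-- path extraction from ReflTransGen -/
lemma gcPath {a b : V} (h : Relation.ReflTransGen E a b) :
    ∃ (m : ℕ) (p : ℕ → V), p 0 = a ∧ p m = b ∧ ∀ i < m, E (p i) (p (i+1)) := by
  induction h with
  | refl => exact ⟨0, fun _ => a, rfl, rfl, by intro i hi; omega⟩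
  | @tail y z h e ih =>
    obtain ⟨m, p, hp0, hpm, hpe⟩ := ih
    refine ⟨m + 1, gcConcat m p (fun i => if i = 0 then y else z), ?_, ?_, ?_⟩
    · by_cases hm : 0 < m
      · rw [gcConcat_lt hm]; exact hp0
      · rw [gcConcat_ge (by omega)]
        have hm0 : m = 0 := by omega
        show (if 0 - m = 0 then y else z) = a
        rw [if_pos (by omega)]
        rw [hm0] at hpm
        rw [← hpm]; exact hp0
    · rw [gcConcat_last]; simp
    · apply gcConcat_edges E hpe
      · intro i hi
        have hi0 : i = 0 := by omega
        subst hi0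
        simpa using e
      · simp [hpm]

/-- k-fold repetition of a closed walk -/
lemma gcRep {n : ℕ} {c : ℕ → V} (h0 : c n = c 0) (hc : ∀ i < n, E (c i) (c (i+1)))
    (k : ℕ) :
    ∃ e : ℕ → V, e 0 = c 0 ∧ e (k * n) = c 0 ∧ (∀ i < k * n, E (e i) (e (i+1))) ∧
      ∀ w : V → V → ℤ, ∑ i ∈ Finset.range (k * n), w (e i) (e (i+1))
        = k * ∑ i ∈ Finset.range n, w (c i) (c (i+1)) := by
  induction k with
  | zero => exact ⟨fun _ => c 0, rfl, by simp, by intro i hi; omega, by simp⟩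
  | succ k ih =>
    obtain ⟨e, he0, hek, hee, hes⟩ := ih
    have hjoin : e 0 = c n := he0.trans h0.symm
    refine ⟨gcConcat n c e, gcConcat_zero hjoin h0, ?_, ?_, ?_⟩
    · have : (k + 1) * n = n + k * n := by ring
      rw [this, gcConcat_last, hek]
    · have : (k + 1) * n = n + k * n := by ring
      rw [this]
      exact gcConcat_edges E hc hee hjoin
    · intro w
      have hl : (k + 1) * n = n + k * n := by ring
      rw [hl, gcConcat_sum w hjoin, hes w]
      push_cast
      ring

/-- reachability along a walk -/
lemma gcWalkReach {n : ℕ} {c : ℕ → V} (hc : ∀ i < n, E (c i) (c (i+1))) :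
    ∀ a b, a ≤ b → b ≤ n → Relation.ReflTransGen E (c a) (c b) := by
  intro a b hab hbn
  have key : ∀ k, a + k ≤ n → Relation.ReflTransGen E (c a) (c (a + k)) := by
    intro k
    induction k with
    | zero => intro _; exact Relation.ReflTransGen.refl
    | succ k ih =>
      intro h
      exact (ih (by omega)).tail (hc (a + k) (by omega))
  have := key (b - a) (by omega)
  rwa [Nat.add_sub_cancel' hab] at this

variable (w₁ w₂ : V → V → ℤ)

/-- a simple cycle in the strongly connected component of `r`, with weight `p` -/
def gcSimple (r : V) (p : ℤ × ℤ) : Prop :=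
  ∃ (n : ℕ) (c : ℕ → V), 1 ≤ n ∧ c n = c 0 ∧ (∀ i < n, E (c i) (c (i+1))) ∧
    (∀ i < n, ∀ j < n, c i = c j → i = j) ∧
    Relation.ReflTransGen E r (c 0) ∧ Relation.ReflTransGen E (c 0) r ∧
    (∑ i ∈ Finset.range n, w₁ (c i) (c (i+1))) = p.1 ∧
    (∑ i ∈ Finset.range n, w₂ (c i) (c (i+1))) = p.2

/-- decomposition of a closed walk into simple cycles within the SCC of `r` -/
lemma gcDecompose (r : V) : ∀ n : ℕ, ∀ c : ℕ → V, 1 ≤ n → c n = c 0 →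
    (∀ i < n, E (c i) (c (i+1))) →
    Relation.ReflTransGen E r (c 0) → Relation.ReflTransGen E (c 0) r →
    ∃ M : Multiset (ℤ × ℤ), (∀ p ∈ M, gcSimple E w₁ w₂ r p) ∧
      (M.map Prod.fst).sum = ∑ i ∈ Finset.range n, w₁ (c i) (c (i+1)) ∧
      (M.map Prod.snd).sum = ∑ i ∈ Finset.range n, w₂ (c i) (c (i+1)) := by
  intro n
  induction n using Nat.strong_induction_on with
  | _ n IH =>
  intro c hn h0 hc hr1 hr2
  by_cases hinj : ∀ i < n, ∀ j < n, c i = c j → i = j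
  · refine ⟨{(∑ i ∈ Finset.range n, w₁ (c i) (c (i+1)),
      ∑ i ∈ Finset.range n, w₂ (c i) (c (i+1)))}, ?_, by simp, by simp⟩
    intro p hp
    rw [Multiset.mem_singleton] at hp
    subst hp
    exact ⟨n, c, hn, h0, hc, hinj, hr1, hr2, rfl, rfl⟩
  · push_neg at hinj
    obtain ⟨i₀, hi₀, j₀, hj₀, hij₀, hne₀⟩ := hinj
    obtain ⟨i, j, hi, hj, hlt, hij⟩ : ∃ i j, i < n ∧ j < n ∧ i < j ∧ c i = c j := by
      rcases Nat.lt_or_ge i₀ j₀ with h | h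
      · exact ⟨i₀, j₀, hi₀, hj₀, h, hij₀⟩
      · exact ⟨j₀, i₀, hj₀, hi₀, by omega, hij₀.symm⟩
    set m := j - i with hm
    have hm1 : 1 ≤ m := by omega
    have hmn : m < n := by omega
    -- the reachability of `c i` within the SCC of `r`
    have hreach_i : Relation.ReflTransGen E r (c i) :=
      hr1.trans (gcWalkReach E hc 0 i (by omega) (by omega))
    have hreach_i' : Relation.ReflTransGen E (c i) r :=
      ((gcWalkReach E hc i n (by omega) (le_refl n)).trans (h0 ▸ Relation.ReflTransGen.refl)).trans hr2
    -- inner cycle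
    set d : ℕ → V := fun k => c (i + k) with hd
    have hd0 : d m = d 0 := by
      show c (i + m) = c (i + 0)
      rw [show i + m = j from by omega, show i + 0 = i from by omega]
      exact hij.symm
    have hde : ∀ k < m, E (d k) (d (k+1)) := by
      intro k hk
      show E (c (i + k)) (c (i + (k + 1)))
      rw [show i + (k + 1) = (i + k) + 1 from by omega]
      exact hc (i + k) (by omega)
    have hdr1 : Relation.ReflTransGen E r (d 0) := by
      show Relation.ReflTransGen E r (c (i + 0))
      rw [show i + 0 = i from rfl]
      exact hreach_i
    have hdr2 : Relation.ReflTransGen E (d 0) r := by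
      show Relation.ReflTransGen E (c (i + 0)) r
      rw [show i + 0 = i from rfl]
      exact hreach_i'
    obtain ⟨M₁, hM₁, hM₁s1, hM₁s2⟩ := IH m hmn d hm1 hd0 hde hdr1 hdr2
    -- outer cycle
    set q : ℕ → V := fun t => c (t + j) with hq
    have hjoin : q 0 = c i := by
      show c (0 + j) = c i
      rw [show 0 + j = j from by omega]
      exact hij.symm
    set e : ℕ → V := gcConcat i c q with he
    have hqe : ∀ t < n - j, E (q t) (q (t+1)) := by
      intro t ht
      show E (c (t + j)) (c ((t + 1) + j))
      rw [show (t + 1) + j = (t + j) + 1 from by omega]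
      exact hc (t + j) (by omega)
    have hce : ∀ t < i, E (c t) (c (t+1)) := fun t ht => hc t (by omega)
    have he0 : e 0 = c 0 := by
      by_cases hipos : 0 < i
      · exact gcConcat_lt hipos
      · rw [he, gcConcat_ge (by omega)]
        have hi0 : i = 0 := by omega
        show c (0 - i + j) = c 0
        rw [show 0 - i + j = j from by omega, ← hij, hi0]
    have hlen : i + (n - j) = n - m := by omega
    have helast : e (i + (n - j)) = c 0 := by
      rw [he, gcConcat_last]
      show c ((n - j) + j) = c 0
      rw [show (n - j) + j = n from by omega]
      exact h0
    have hee : ∀ t < i + (n - j), E (e t) (e (t+1)) := gcConcat_edges E hce hqe hjoin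
    have hen1 : 1 ≤ i + (n - j) := by omega
    have henlt : i + (n - j) < n := by omega
    obtain ⟨M₂, hM₂, hM₂s1, hM₂s2⟩ := IH (i + (n - j)) henlt e hen1
      (helast.trans he0.symm) hee (he0 ▸ hr1) (he0 ▸ hr2)
    -- sums split
    have hsplit : ∀ w : V → V → ℤ,
        (∑ t ∈ Finset.range m, w (d t) (d (t+1)))
          + ∑ t ∈ Finset.range (i + (n - j)), w (e t) (e (t+1))
        = ∑ t ∈ Finset.range n, w (c t) (c (t+1)) := by
      intro w
      rw [he, gcConcat_sum w hjoin]
      have hne : n = i + (m + (n - j)) := by omega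
      rw [hne, Finset.sum_range_add, Finset.sum_range_add]
      have e1 : ∑ t ∈ Finset.range m, w (d t) (d (t+1))
          = ∑ t ∈ Finset.range m, w (c (i + t)) (c (i + t + 1)) := by
        apply Finset.sum_congr rfl
        intro t _
        show w (c (i + t)) (c (i + (t + 1))) = _
        rw [show i + (t + 1) = i + t + 1 from by omega]
      have e2 : ∑ t ∈ Finset.range (n - j), w (q t) (q (t+1))
          = ∑ t ∈ Finset.range (n - j), w (c (i + (m + t))) (c (i + (m + t) + 1)) := by
        apply Finset.sum_congr rfl
        intro t _
        show w (c (t + j)) (c ((t + 1) + j)) = _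
        rw [show t + j = i + (m + t) from by omega,
          show (t + 1) + j = i + (m + t) + 1 from by omega]
      rw [e1, show i + (m + (n - j)) - j = n - j from by omega, e2]
      ring
    refine ⟨M₁ + M₂, ?_, ?_, ?_⟩
    · intro p hp
      rcases Multiset.mem_add.mp hp with h | h
      · exact hM₁ p h
      · exact hM₂ p h
    · rw [Multiset.map_add, Multiset.sum_add, hM₁s1, hM₂s1]
      exact hsplit w₁
    · rw [Multiset.map_add, Multiset.sum_add, hM₁s2, hM₂s2]
      exact hsplit w₂

end GoodCycleAux

lemma gcSum_nonpos (S : Multiset ℤ) (h : ∀ z ∈ S, z ≤ 0) : S.sum ≤ 0 := by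
  induction S using Multiset.induction with
  | empty => simp
  | cons a s ih =>
    rw [Multiset.sum_cons]
    have := h a (Multiset.mem_cons_self a s)
    have := ih (fun z hz => h z (Multiset.mem_cons_of_mem hz))
    omega

lemma gcExists_pos (S : Multiset ℤ) (h : 0 < S.sum) : ∃ z ∈ S, 0 < z := by
  by_contra hc
  push_neg at hc
  have := gcSum_nonpos S (fun z hz => hc z hz)
  omega

lemma gcCombin (M : Multiset (ℤ × ℤ))
    (h1 : 0 ≤ (M.map Prod.fst).sum) (h2 : 0 < (M.map Prod.snd).sum) :
    (∃ p ∈ M, 0 ≤ p.1 ∧ 0 < p.2) ∨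
    (∃ p ∈ M, ∃ q ∈ M, p.1 < 0 ∧ 0 < p.2 ∧ 0 < q.1 ∧ q.2 ≤ 0 ∧
      0 < q.1 * p.2 - p.1 * q.2) := by
  by_contra hcon
  push_neg at hcon
  obtain ⟨hA, hB⟩ := hcon
  obtain ⟨z, hzM, hz⟩ := gcExists_pos (M.map Prod.snd) h2
  obtain ⟨p₀, hp₀M, rfl⟩ := Multiset.mem_map.mp hzM
  set T := M.toFinset.filter (fun p => p.1 < 0 ∧ 0 < p.2) with hT
  have hp₀1 : p₀.1 < 0 := by
    by_contra h
    push_neg at h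
    have := hA p₀ hp₀M h
    omega
  have hTne : T.Nonempty := ⟨p₀, by simp [hT, Multiset.mem_toFinset.mpr hp₀M, hp₀1, hz]⟩
  obtain ⟨ps, hpsT, hmax⟩ := Finset.exists_max_image T (fun p => (p.2 : ℚ) / (-p.1)) hTne
  simp only [hT, Finset.mem_filter, Multiset.mem_toFinset] at hpsT
  obtain ⟨hpsM, hps1, hps2⟩ := hpsT
  set x : ℤ := -ps.1 with hx
  set y : ℤ := ps.2 with hy
  have hx1 : 1 ≤ x := by omega
  have hy1 : 1 ≤ y := by omega
  have key : ∀ p ∈ M, y * p.1 + x * p.2 ≤ 0 := by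
    intro p hpM
    by_cases h2p : 0 < p.2
    · have h1p : p.1 < 0 := by
        by_contra h
        push_neg at h
        have := hA p hpM h
        omega
      have hpT : p ∈ T := by simp [hT, Multiset.mem_toFinset.mpr hpM, h1p, h2p]
      have hle := hmax p hpT
      have hden1 : (0:ℚ) < -(p.1:ℚ) := by
        have : (p.1:ℚ) < 0 := by exact_mod_cast h1p
        linarith
      have hden2 : (0:ℚ) < -(ps.1:ℚ) := by
        have : (ps.1:ℚ) < 0 := by exact_mod_cast hps1
        linarith
      rw [div_le_div_iff₀ hden1 hden2] at hle
      have hzint : p.2 * -ps.1 ≤ y * -p.1 := by exact_mod_cast hle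
      rw [hx]
      linarith
    · push_neg at h2p
      by_cases h1p : 0 < p.1
      · have := hB ps hpsM p hpM hps1 hps2 h1p h2p
        have hps1x : ps.1 = -x := by omega
        nlinarith [this]
      · push_neg at h1p
        nlinarith
  have hsum : (M.map (fun p => y * p.1 + x * p.2)).sum ≤ 0 := by
    apply gcSum_nonpos
    intro z hz
    obtain ⟨p, hpM, rfl⟩ := Multiset.mem_map.mp hz
    exact key p hpM
  have heq : (M.map (fun p => y * p.1 + x * p.2)).sum
      = y * (M.map Prod.fst).sum + x * (M.map Prod.snd).sum := by
    rw [show (fun p : ℤ × ℤ => y * p.1 + x * p.2)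
        = fun p : ℤ × ℤ => (fun q : ℤ × ℤ => y * q.1) p + (fun q : ℤ × ℤ => x * q.2) p from rfl,
      Multiset.sum_map_add]
    rw [show (fun q : ℤ × ℤ => y * q.1) = fun q : ℤ × ℤ => y * Prod.fst q from rfl]
    rw [show (fun q : ℤ × ℤ => x * q.2) = fun q : ℤ × ℤ => x * Prod.snd q from rfl]
    rw [Multiset.sum_map_mul_left, Multiset.sum_map_mul_left]
  nlinarith [heq, hsum, h1, h2, hx1, hy1]



/-- Characterization of the existence of a reachable good cycle: a finite
2-dimensionally weighted directed graph has a cycle reachable from `v₀` with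
`w₁ ≥ 0` and `w₂ > 0` iff either (1) there is such a cycle that is simple, or
(2) there are two simple cycles `C, C'` in one strongly connected component
reachable from `v₀` with `w(C) = (-x, y)`, `w(C') = (x', -y')`, `x, x', y ≥ 1`,
`y' ≥ 0`, making an angle `< 180°` (i.e. `x'·y - x·y' > 0`). -/
theorem good_cycle_characterization {V : Type*} [Fintype V]
    (E : V → V → Prop) (w₁ w₂ : V → V → ℤ) (v₀ : V) :
    (∃ (n : ℕ) (c : ℕ → V), 1 ≤ n ∧ c n = c 0 ∧
        (∀ i < n, E (c i) (c (i + 1))) ∧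
        Relation.ReflTransGen E v₀ (c 0) ∧
        0 ≤ ∑ i ∈ Finset.range n, w₁ (c i) (c (i + 1)) ∧
        0 < ∑ i ∈ Finset.range n, w₂ (c i) (c (i + 1)))
    ↔
    ((∃ (n : ℕ) (c : ℕ → V), 1 ≤ n ∧ c n = c 0 ∧
        (∀ i < n, E (c i) (c (i + 1))) ∧
        (∀ i < n, ∀ j < n, c i = c j → i = j) ∧
        Relation.ReflTransGen E v₀ (c 0) ∧
        0 ≤ ∑ i ∈ Finset.range n, w₁ (c i) (c (i + 1)) ∧
        0 < ∑ i ∈ Finset.range n, w₂ (c i) (c (i + 1)))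
      ∨
      (∃ (n n' : ℕ) (c c' : ℕ → V) (x x' y y' : ℤ),
        1 ≤ n ∧ c n = c 0 ∧ (∀ i < n, E (c i) (c (i + 1))) ∧
        (∀ i < n, ∀ j < n, c i = c j → i = j) ∧
        1 ≤ n' ∧ c' n' = c' 0 ∧ (∀ i < n', E (c' i) (c' (i + 1))) ∧
        (∀ i < n', ∀ j < n', c' i = c' j → i = j) ∧
        Relation.ReflTransGen E v₀ (c 0) ∧
        Relation.ReflTransGen E (c 0) (c' 0) ∧
        Relation.ReflTransGen E (c' 0) (c 0) ∧
        1 ≤ x ∧ 1 ≤ x' ∧ 1 ≤ y ∧ 0 ≤ y' ∧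
        (∑ i ∈ Finset.range n, w₁ (c i) (c (i + 1))) = -x ∧
        (∑ i ∈ Finset.range n, w₂ (c i) (c (i + 1))) = y ∧
        (∑ i ∈ Finset.range n', w₁ (c' i) (c' (i + 1))) = x' ∧
        (∑ i ∈ Finset.range n', w₂ (c' i) (c' (i + 1))) = -y' ∧
        0 < x' * y - x * y')) := by
  constructor
  · rintro ⟨n, c, hn, h0, hc, hreach, hw1, hw2⟩
    obtain ⟨M, hM, hs1, hs2⟩ := gcDecompose E w₁ w₂ (c 0) n c hn h0 hc
      Relation.ReflTransGen.refl Relation.ReflTransGen.refl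
    rcases gcCombin M (hs1 ▸ hw1) (hs2 ▸ hw2) with
      ⟨p, hpM, hp1, hp2⟩ | ⟨p, hpM, q, hqM, hp1, hp2, hq1, hq2, hdet⟩
    · obtain ⟨nA, cA, hnA, h0A, hcA, hinjA, hr1A, _, hS1A, hS2A⟩ := hM p hpM
      left
      exact ⟨nA, cA, hnA, h0A, hcA, hinjA, hreach.trans hr1A,
        by rw [hS1A]; exact hp1, by rw [hS2A]; exact hp2⟩
    · obtain ⟨nA, cA, hnA, h0A, hcA, hinjA, hr1A, hr2A, hS1A, hS2A⟩ := hM p hpM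
      obtain ⟨nB, cB, hnB, h0B, hcB, hinjB, hr1B, hr2B, hS1B, hS2B⟩ := hM q hqM
      right
      refine ⟨nA, nB, cA, cB, -p.1, q.1, p.2, -q.2, hnA, h0A, hcA, hinjA,
        hnB, h0B, hcB, hinjB, hreach.trans hr1A, hr2A.trans hr1B, hr2B.trans hr1A,
        by omega, by omega, by omega, by omega,
        by rw [hS1A]; ring, hS2A, hS1B, by rw [hS2B]; ring, ?_⟩
      rw [neg_mul_neg]
      exact hdet
  · rintro (⟨n, c, hn, h0, hc, _, hreach, hw1, hw2⟩ |
      ⟨n, n', c, c', x, x', y, y', hn, h0, hc, hinj, hn', h0', hc', hinj',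
        hrv, hr1, hr2, hx, hx', hy, hy', hS1, hS2, hS1', hS2', hdet⟩)
    · exact ⟨n, c, hn, h0, hc, hreach, hw1, hw2⟩
    · obtain ⟨mP, P, hP0, hPm, hPe⟩ := gcPath E hr1
      obtain ⟨mQ, Q, hQ0, hQm, hQe⟩ := gcPath E hr2
      set p₁ : ℤ := ∑ i ∈ Finset.range mP, w₁ (P i) (P (i+1)) with hp₁
      set p₂ : ℤ := ∑ i ∈ Finset.range mP, w₂ (P i) (P (i+1)) with hp₂
      set q₁ : ℤ := ∑ i ∈ Finset.range mQ, w₁ (Q i) (Q (i+1)) with hq₁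
      set q₂ : ℤ := ∑ i ∈ Finset.range mQ, w₂ (Q i) (Q (i+1)) with hq₂
      set s : ℤ := 1 + |p₁ + q₁| with hs
      set t : ℤ := 1 + s * y' + |p₂ + q₂| with ht
      have hs1 : 1 ≤ s := by
        have := abs_nonneg (p₁ + q₁)
        omega
      have ht1 : 1 ≤ t := by
        have h1 := abs_nonneg (p₂ + q₂)
        have h2 : 0 ≤ s * y' := by positivity
        omega
      set a : ℕ := (x' * t).toNat with ha
      set b : ℕ := (x * t + s).toNat with hb
      have hxt : 1 ≤ x' * t := by nlinarith
      have hbt : 1 ≤ x * t + s := by nlinarith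
      have haz : (a : ℤ) = x' * t := Int.toNat_of_nonneg (by omega)
      have hbz : (b : ℤ) = x * t + s := Int.toNat_of_nonneg (by omega)
      have ha1 : 1 ≤ a := by omega
      have hb1 : 1 ≤ b := by omega
      obtain ⟨A, hA0, hAk, hAe, hAs⟩ := gcRep E h0 hc a
      obtain ⟨B, hB0, hBk, hBe, hBs⟩ := gcRep E h0' hc' b
      -- W3 = B ++ Q  (from c' 0 to c 0)
      have join3 : Q 0 = B (b * n') := hQ0.trans hBk.symm
      set W3 : ℕ → V := gcConcat (b * n') B Q with hW3
      have hW3zero : W3 0 = c' 0 := by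
        rw [hW3, gcConcat_lt (by exact Nat.mul_pos (by omega) (by omega))]
        exact hB0
      have hW3last : W3 (b * n' + mQ) = c 0 := by
        rw [hW3, gcConcat_last]; exact hQm
      have hW3e : ∀ i < b * n' + mQ, E (W3 i) (W3 (i+1)) := gcConcat_edges E hBe hQe join3
      have hW3s : ∀ w : V → V → ℤ,
          ∑ i ∈ Finset.range (b * n' + mQ), w (W3 i) (W3 (i+1))
            = (b : ℤ) * (∑ i ∈ Finset.range n', w (c' i) (c' (i+1)))
              + ∑ i ∈ Finset.range mQ, w (Q i) (Q (i+1)) := by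
        intro w
        rw [hW3, gcConcat_sum w join3, hBs w]
      -- W2 = P ++ W3  (from c 0 to c 0)
      have join2 : W3 0 = P mP := hW3zero.trans hPm.symm
      set W2 : ℕ → V := gcConcat mP P W3 with hW2
      have hW2zero : W2 0 = c 0 := by
        by_cases hmp : 0 < mP
        · rw [hW2, gcConcat_lt hmp]; exact hP0
        · have hm0 : mP = 0 := by omega
          rw [hW2, gcConcat_ge (by omega)]
          have h00 : 0 - mP = 0 := by omega
          rw [h00, hW3zero, ← hPm, hm0]
          exact hP0
      have hW2last : W2 (mP + (b * n' + mQ)) = c 0 := by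
        rw [hW2, gcConcat_last]; exact hW3last
      have hW2e : ∀ i < mP + (b * n' + mQ), E (W2 i) (W2 (i+1)) :=
        gcConcat_edges E hPe hW3e join2
      have hW2s : ∀ w : V → V → ℤ,
          ∑ i ∈ Finset.range (mP + (b * n' + mQ)), w (W2 i) (W2 (i+1))
            = (∑ i ∈ Finset.range mP, w (P i) (P (i+1)))
              + ((b : ℤ) * (∑ i ∈ Finset.range n', w (c' i) (c' (i+1)))
                + ∑ i ∈ Finset.range mQ, w (Q i) (Q (i+1))) := by
        intro w
        rw [hW2, gcConcat_sum w join2, hW3s w]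
      -- W = A ++ W2
      have join1 : W2 0 = A (a * n) := hW2zero.trans hAk.symm
      set W : ℕ → V := gcConcat (a * n) A W2 with hW
      set N : ℕ := a * n + (mP + (b * n' + mQ)) with hN
      have hWzero : W 0 = c 0 := by
        rw [hW, gcConcat_lt (by exact Nat.mul_pos (by omega) (by omega))]
        exact hA0
      have hWlast : W N = c 0 := by
        rw [hW, hN, gcConcat_last]; exact hW2last
      have hWe : ∀ i < N, E (W i) (W (i+1)) := gcConcat_edges E hAe hW2e join1
      have hWs : ∀ w : V → V → ℤ,
          ∑ i ∈ Finset.range N, w (W i) (W (i+1))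
            = (a : ℤ) * (∑ i ∈ Finset.range n, w (c i) (c (i+1)))
              + ((∑ i ∈ Finset.range mP, w (P i) (P (i+1)))
                + ((b : ℤ) * (∑ i ∈ Finset.range n', w (c' i) (c' (i+1)))
                  + ∑ i ∈ Finset.range mQ, w (Q i) (Q (i+1)))) := by
        intro w
        rw [hW, hN, gcConcat_sum w join1, hAs w, hW2s w]
      have hN1 : 1 ≤ N := by
        have : 1 ≤ a * n := Nat.mul_le_mul ha1 hn
        omega
      refine ⟨N, W, hN1, hWlast.trans hWzero.symm, hWe, hWzero ▸ hrv, ?_, ?_⟩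
      · rw [hWs w₁, hS1, hS1', haz, hbz, ← hp₁, ← hq₁]
        have habs : -(|p₁ + q₁|) ≤ p₁ + q₁ := neg_abs_le _
        nlinarith
      · rw [hWs w₂, hS2, hS2', haz, hbz, ← hp₂, ← hq₂]
        have habs : -(|p₂ + q₂|) ≤ p₂ + q₂ := neg_abs_le _
        nlinarith
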